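/- Let C be a finite candidate set with p ∈ C, let V and W be finite multisets of First-Last votes on C (the registered and unregistered voters), and let k ∈ ℕ. Suppose the number of votes in W whose first component is p is at least k. Then there exists a submultiset W′ of W with |W′| = k such that p is a First-Last winner of V + W′, if and only if there exists such a submultiset W′ in which every vote has first component p. -/
import Mathlib


/-- The First-Last score of candidate `c` in a multiset of First-Last votes:
the number of votes ranking `c` first minus the number ranking `c` last. -/
def flScore {C : Type} [DecidableEq C] (V : Multiset (C × C)) (c : C) : ℤ :=
  ((V.filter (fun v => v.1 = c)).card : ℤ) - ((V.filter (fun v => v.2 = c)).card : ℤ)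

/-- `c` is a First-Last winner of `V` if its score is at least that of every candidate. -/
def flWinner {C : Type} [Fintype C] [DecidableEq C] (V : Multiset (C × C)) (c : C) : Prop :=
  ∀ d : C, flScore V d ≤ flScore V c

lemma flScore_add {C : Type} [DecidableEq C] (X Y : Multiset (C × C)) (c : C) :
    flScore (X + Y) c = flScore X c + flScore Y c := by
  simp [flScore, Multiset.filter_add]; ring

lemma exists_sub_of_card {α : Type*} (s : Multiset α) (n : ℕ) (hn : n ≤ Multiset.card s) :
    ∃ t ≤ s, Multiset.card t = n := by
  refine ⟨(s.toList.take n : List α), ?_, ?_⟩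
  · have h1 : ((s.toList.take n : List α) : Multiset α) ≤ (s.toList : Multiset α) :=
      (List.take_sublist n s.toList).subperm
    simpa using h1
  · simp [Multiset.coe_card, List.length_take]
    omega

/-- if at least `k` unregistered votes rank `p` first, then `p` can be made a
winner by adding exactly `k` unregistered votes iff it can be done adding only votes
that rank `p` first. -/
theorem stmt11 {C : Type} [Fintype C] [DecidableEq C] (p : C)
    (V W : Multiset (C × C))
    (hV : ∀ v ∈ V, v.1 ≠ v.2) (hW : ∀ v ∈ W, v.1 ≠ v.2)
    (k : ℕ) (hk : k ≤ Multiset.card (W.filter (fun v => v.1 = p))) :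
    (∃ W' ≤ W, Multiset.card W' = k ∧ flWinner (V + W') p)
    ↔ (∃ W' ≤ W, Multiset.card W' = k ∧ (∀ v ∈ W', v.1 = p) ∧ flWinner (V + W') p) := by
  constructor
  · rintro ⟨W', hle, hcard, hwin⟩
    set A := W'.filter (fun v => v.1 = p) with hA
    set B := W'.filter (fun v => ¬ v.1 = p) with hB
    have hAB : A + B = W' := Multiset.filter_add_not _ _
    have hAleW' : A ≤ W' := Multiset.filter_le _ _
    have hAk : Multiset.card A ≤ k := hcard ▸ Multiset.card_le_card hAleW'
    -- enough p-first votes left in W - W'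
    have hsub : ((W - W').filter (fun v => v.1 = p)) =
        W.filter (fun v => v.1 = p) - W'.filter (fun v => v.1 = p) :=
      Multiset.filter_sub _ _ _
    have hAW : A ≤ W.filter (fun v => v.1 = p) := hA ▸ Multiset.filter_le_filter _ hle
    have hcardsub : k - Multiset.card A ≤
        Multiset.card ((W - W').filter (fun v => v.1 = p)) := by
      rw [hsub, ← hA, Multiset.card_sub hAW]
      have := Multiset.card_le_card hAW
      omega
    obtain ⟨E, hEle, hEcard⟩ := exists_sub_of_card _ _ hcardsub
    have hEp : ∀ v ∈ E, v.1 = p := by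
      intro v hv
      exact (Multiset.mem_filter.1 (Multiset.mem_of_le hEle hv)).2
    have hEW : E ≤ W - W' := le_trans hEle (Multiset.filter_le _ _)
    refine ⟨A + E, ?_, ?_, ?_, ?_⟩
    · calc A + E ≤ W' + (W - W') := add_le_add hAleW' hEW
      _ = W := by rw [add_tsub_cancel_of_le hle]
    · rw [Multiset.card_add, hEcard]; omega
    · intro v hv
      rcases Multiset.mem_add.1 hv with h | h
      · exact (Multiset.mem_filter.1 h).2
      · exact hEp v h
    · intro d
      by_cases hd : d = p
      · subst hd; exact le_refl _
      · -- score facts about E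
        have hE2 : ∀ v ∈ E, v.2 ≠ p := by
          intro v hv
          have hvW : v ∈ W := Multiset.mem_of_le (le_trans hEW (Multiset.sub_le_self _ _)) hv
          have := hW v hvW
          rw [hEp v hv] at this
          exact fun h => this h.symm
        have hEfp : E.filter (fun v => v.1 = p) = E := Multiset.filter_eq_self.2 hEp
        have hEsp : E.filter (fun v => v.2 = p) = 0 := by
          rw [Multiset.filter_eq_nil]; exact fun v hv => hE2 v hv
        have hEfd : E.filter (fun v => v.1 = d) = 0 := by
          rw [Multiset.filter_eq_nil]
          intro v hv h
          exact hd (((hEp v hv) ▸ h.symm : d = p))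
        have hEscorep : flScore E p = Multiset.card E := by
          simp [flScore, hEfp, hEsp]
        have hEscored : flScore E d ≤ 0 := by
          simp [flScore, hEfd]
        -- score facts about B
        have hBfp : B.filter (fun v => v.1 = p) = 0 := by
          rw [Multiset.filter_eq_nil]
          intro v hv
          exact (Multiset.mem_filter.1 hv).2
        have hBscorep : flScore B p ≤ 0 := by
          simp [flScore, hBfp]
        have hBscored : -(Multiset.card B : ℤ) ≤ flScore B d := by
          have := Multiset.card_le_card (Multiset.filter_le (fun v => v.2 = d) B)
          simp only [flScore]
          have : ((B.filter (fun v => v.2 = d)).card : ℤ) ≤ (Multiset.card B : ℤ) := by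
            exact_mod_cast this
          omega
        have hEB : Multiset.card E = Multiset.card B := by
          have : Multiset.card A + Multiset.card B = k := by
            rw [← Multiset.card_add, hAB, hcard]
          omega
        -- use the original winning condition
        have hwd := hwin d
        rw [show V + W' = V + A + B by rw [← hAB, add_assoc]] at hwd
        simp only [flScore_add] at hwd
        rw [show V + (A + E) = V + A + E by rw [add_assoc]]
        simp only [flScore_add]
        rw [hEscorep]
        have : (Multiset.card E : ℤ) = (Multiset.card B : ℤ) := by exact_mod_cast hEB
        linarith
  · rintro ⟨W', h1, h2, _, h4⟩
    exact ⟨W', h1, h2, h4⟩
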